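/- arXiv:2205.10896 — 2 statements merged into one kernel-verified Lean document; each statement's English description precedes it below -/
import Mathlib

section
/- Let U_{ij}^{(0)}(-t, s_1,...,s_m, t) = G_{ij}^{(0)}(s_m,t) W_s G_{ij}^{(0)}(s_{m-1},s_m) W_s ⋯ W_s G_{ij}^{(0)}(s_1,s_2) W_s G_{ij}^{(0)}(-t,s_1), where exactly one of the factors G_{ij}^{(0)}(s_k,s_{k+1}) crosses zero (s_k < 0 ≤ s_{k+1}) and all others satisfy the shift invariance. Then for Δt ≥ 0, U_{ij}^{(0)}(-t−Δt, I_{Δt}(s), t+Δt) = Σ_{k,l} b_{kl}^{ij} U_{kl}^{(0)}(-t, s, t), where b_{kl}^{ij} satisfy exp(iΔt H_s)|i⟩⟨j|exp(−iΔt H_s) = Σ_{k,l} b_{kl}^{ij}|k⟩⟨l|. -/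
/-- The basis bare propagator `𝒢_{ij}^{(0)}(s_i,s_f)` of Definition 3.1: the exponential
formula on segments not crossing `0`, and `exp(i s_f H_s)|i⟩⟨j|exp(i s_i H_s)` on the
segment crossing `0`. -/
noncomputable def Gij (Hs : Matrix (Fin 2) (Fin 2) ℂ) (i j : Fin 2) (si sf : ℝ) :
    Matrix (Fin 2) (Fin 2) ℂ :=
  if sf < 0 then NormedSpace.exp ((-Complex.I * ((sf : ℂ) - si)) • Hs)
  else if 0 ≤ si then NormedSpace.exp ((-Complex.I * ((si : ℂ) - sf)) • Hs)
  else NormedSpace.exp ((Complex.I * sf) • Hs) * Matrix.single i j (1 : ℂ) *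
    NormedSpace.exp ((Complex.I * si) • Hs)

/-- The system associated functional
`𝒰_{ij}^{(0)}(lo, s_1,...,s_m, hi) = 𝒢_{ij}^{(0)}(s_m,hi) W_s ⋯ W_s 𝒢_{ij}^{(0)}(lo,s_1)`,
defined by recursion on the list of interior time points. -/
noncomputable def Uij (Hs Ws : Matrix (Fin 2) (Fin 2) ℂ) (i j : Fin 2) :
    List ℝ → ℝ → ℝ → Matrix (Fin 2) (Fin 2) ℂ
  | [], lo, hi => Gij Hs i j lo hi
  | x :: rest, lo, hi => Uij Hs Ws i j rest x hi * Ws * Gij Hs i j lo x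

/-- The shift map: add `Δt` to nonnegative points, subtract `Δt` from negative ones. -/
noncomputable def shiftPt (Δt x : ℝ) : ℝ := if 0 ≤ x then x + Δt else x - Δt

lemma exp_smul_add (Hs : Matrix (Fin 2) (Fin 2) ℂ) (a b : ℂ) :
    NormedSpace.exp ((a + b) • Hs) = NormedSpace.exp (a • Hs) * NormedSpace.exp (b • Hs) := by
  rw [add_smul]
  exact Matrix.exp_add_of_commute _ _ (((Commute.refl Hs).smul_left a).smul_right b)

/-- The crossing-segment propagator formula. -/
lemma Gij_cross (Hs : Matrix (Fin 2) (Fin 2) ℂ) (i j : Fin 2) {lo hi : ℝ}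
    (hlo : lo < 0) (hhi : 0 ≤ hi) :
    Gij Hs i j lo hi = NormedSpace.exp ((Complex.I * hi) • Hs) *
      Matrix.single i j (1 : ℂ) * NormedSpace.exp ((Complex.I * lo) • Hs) := by
  rw [Gij, if_neg (not_lt.2 hhi), if_neg (not_le.2 hlo)]

/-- Shift invariance of a segment lying in the negative half line. -/
lemma Gij_neg (Hs : Matrix (Fin 2) (Fin 2) ℂ) (i j k l : Fin 2) {lo hi δ : ℝ}
    (hhi : hi < 0) (hδ : 0 ≤ δ) :
    Gij Hs i j (lo - δ) (hi - δ) = Gij Hs k l lo hi := by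
  rw [Gij, Gij, if_pos hhi, if_pos (by linarith : hi - δ < 0)]
  push_cast
  ring_nf

/-- Shift invariance of a segment lying in the nonnegative half line. -/
lemma Gij_pos (Hs : Matrix (Fin 2) (Fin 2) ℂ) (i j k l : Fin 2) {lo hi δ : ℝ}
    (hlo : 0 ≤ lo) (hhi : 0 ≤ hi) (hδ : 0 ≤ δ) :
    Gij Hs i j (lo + δ) (hi + δ) = Gij Hs k l lo hi := by
  rw [Gij, Gij, if_neg (not_lt.2 hhi), if_neg (not_lt.2 (by linarith : (0:ℝ) ≤ hi + δ)),
    if_pos hlo, if_pos (by linarith : (0:ℝ) ≤ lo + δ)]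
  push_cast
  ring_nf

/-- Shift invariance for an associated functional lying in the nonnegative half line. -/
lemma Uij_pos (Hs Ws : Matrix (Fin 2) (Fin 2) ℂ) (i j k l : Fin 2) {δ : ℝ} (hδ : 0 ≤ δ) :
    ∀ (ss : List ℝ), (∀ a ∈ ss, 0 ≤ a) → ∀ {lo hi : ℝ}, 0 ≤ lo → 0 ≤ hi →
      Uij Hs Ws i j (ss.map (shiftPt δ)) (lo + δ) (hi + δ) = Uij Hs Ws k l ss lo hi
  | [], _, lo, hi, hlo, hhi => by
    simpa [Uij] using Gij_pos Hs i j k l hlo hhi hδ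
  | x :: rest, hmem, lo, hi, hlo, hhi => by
    have hx : 0 ≤ x := hmem x (by simp)
    have hrest : ∀ a ∈ rest, 0 ≤ a := fun a ha => hmem a (by simp [ha])
    simp only [List.map_cons, Uij, shiftPt, if_pos hx]
    rw [Uij_pos Hs Ws i j k l hδ rest hrest hx hhi, Gij_pos Hs i j k l hlo hx hδ]

/-- The crossing segment picks up the conjugated matrix unit. -/
lemma Gij_cross_shift (Hs : Matrix (Fin 2) (Fin 2) ℂ) (i j : Fin 2) {Δt : ℝ} (hΔt : 0 ≤ Δt)
    (b : Fin 2 → Fin 2 → ℂ)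
    (hb : NormedSpace.exp ((Complex.I * Δt) • Hs) * Matrix.single i j (1 : ℂ) *
        NormedSpace.exp ((-Complex.I * Δt) • Hs) =
      ∑ k, ∑ l, b k l • Matrix.single k l (1 : ℂ))
    {lo hi : ℝ} (hlo : lo < 0) (hhi : 0 ≤ hi) :
    Gij Hs i j (lo - Δt) (hi + Δt) = ∑ k, ∑ l, b k l • Gij Hs k l lo hi := by
  rw [Gij_cross Hs i j (by linarith) (by linarith)]
  have e1 : (Complex.I * ((hi : ℝ) + Δt : ℝ)) = Complex.I * hi + Complex.I * Δt := by
    push_cast; ring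
  have e2 : (Complex.I * ((lo : ℝ) - Δt : ℝ)) = -Complex.I * Δt + Complex.I * lo := by
    push_cast; ring
  rw [e1, e2, exp_smul_add, exp_smul_add]
  calc NormedSpace.exp ((Complex.I * hi) • Hs) * NormedSpace.exp ((Complex.I * Δt) • Hs) *
        Matrix.single i j (1 : ℂ) *
        (NormedSpace.exp ((-Complex.I * Δt) • Hs) * NormedSpace.exp ((Complex.I * lo) • Hs))
      = NormedSpace.exp ((Complex.I * hi) • Hs) *
        (NormedSpace.exp ((Complex.I * Δt) • Hs) * Matrix.single i j (1 : ℂ) *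
          NormedSpace.exp ((-Complex.I * Δt) • Hs)) *
        NormedSpace.exp ((Complex.I * lo) • Hs) := by simp only [mul_assoc]
    _ = ∑ k, ∑ l, b k l • Gij Hs k l lo hi := by
        rw [hb]
        simp only [Finset.mul_sum, Finset.sum_mul, mul_smul_comm, smul_mul_assoc, mul_assoc]
        refine Finset.sum_congr rfl fun k _ => Finset.sum_congr rfl fun l _ => ?_
        rw [Gij_cross Hs k l hlo hhi]
        simp only [mul_assoc]

/-- The core induction for Lemma 2.4. -/
lemma Uij_shift_aux (Hs Ws : Matrix (Fin 2) (Fin 2) ℂ) (i j : Fin 2) {Δt : ℝ} (hΔt : 0 ≤ Δt)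
    (b : Fin 2 → Fin 2 → ℂ)
    (hb : NormedSpace.exp ((Complex.I * Δt) • Hs) * Matrix.single i j (1 : ℂ) *
        NormedSpace.exp ((-Complex.I * Δt) • Hs) =
      ∑ k, ∑ l, b k l • Matrix.single k l (1 : ℂ)) :
    ∀ (ss : List ℝ), ss.Pairwise (· ≤ ·) → ∀ {lo hi : ℝ}, lo < 0 → 0 ≤ hi →
      Uij Hs Ws i j (ss.map (shiftPt Δt)) (lo - Δt) (hi + Δt) =
        ∑ k, ∑ l, b k l • Uij Hs Ws k l ss lo hi
  | [], _, lo, hi, hlo, hhi => by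
    simpa [Uij] using Gij_cross_shift Hs i j hΔt b hb hlo hhi
  | x :: rest, hsort, lo, hi, hlo, hhi => by
    obtain ⟨hx_le, hsrest⟩ := List.pairwise_cons.mp hsort
    by_cases hx : 0 ≤ x
    · -- the crossing segment is `[lo, x]`
      have hrest : ∀ a ∈ rest, 0 ≤ a := fun a ha => le_trans hx (hx_le a ha)
      simp only [List.map_cons, Uij, shiftPt, if_pos hx]
      rw [Gij_cross_shift Hs i j hΔt b hb hlo hx]
      simp only [Finset.mul_sum, mul_smul_comm]
      refine Finset.sum_congr rfl fun k _ => Finset.sum_congr rfl fun l _ => ?_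
      rw [Uij_pos Hs Ws i j k l hΔt rest hrest hx hhi]
    · -- the crossing segment is further up
      have hx' : x < 0 := lt_of_not_ge hx
      simp only [List.map_cons, Uij, shiftPt, if_neg hx]
      rw [Uij_shift_aux Hs Ws i j hΔt b hb rest hsrest hx' hhi,
        Gij_neg Hs i j i j hx' hΔt]
      simp only [Finset.sum_mul, smul_mul_assoc]
      refine Finset.sum_congr rfl fun k _ => Finset.sum_congr rfl fun l _ => ?_
      have hG : Gij Hs i j lo x = Gij Hs k l lo x := by
        simpa using Gij_neg Hs i j k l (δ := 0) hx' le_rfl (lo := lo) (hi := x)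
      rw [hG]

/-- Lemma 2.4 of the paper:
`𝒰_{ij}^{(0)}(-t−Δt, I_{Δt}(s), t+Δt) = Σ_{k,l} b_{kl}^{ij} 𝒰_{kl}^{(0)}(-t, s, t)`,
where `exp(iΔt H_s)|i⟩⟨j|exp(−iΔt H_s) = Σ_{k,l} b_{kl}^{ij}|k⟩⟨l|`. -/
theorem Uij_shift (Hs Ws : Matrix (Fin 2) (Fin 2) ℂ) (i j : Fin 2)
    (t Δt : ℝ) (ht : 0 < t) (hΔt : 0 ≤ Δt)
    (ss : List ℝ) (hsort : ss.Pairwise (· ≤ ·)) (hmem : ∀ x ∈ ss, -t ≤ x ∧ x ≤ t)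
    (b : Fin 2 → Fin 2 → ℂ)
    (hb : NormedSpace.exp ((Complex.I * Δt) • Hs) * Matrix.single i j (1 : ℂ) *
        NormedSpace.exp ((-Complex.I * Δt) • Hs) =
      ∑ k, ∑ l, b k l • Matrix.single k l (1 : ℂ)) :
    Uij Hs Ws i j (ss.map (shiftPt Δt)) (-(t + Δt)) (t + Δt) =
      ∑ k, ∑ l, b k l • Uij Hs Ws k l ss (-t) t := by
  have h1 : -(t + Δt) = -t - Δt := by ring
  rw [h1]
  exact Uij_shift_aux Hs Ws i j hΔt b hb ss hsort (by linarith) (le_of_lt ht)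
end

section
/- The domain decomposition identity: for t ≥ 0, Δt ≥ 0 and m ≥ 1, the simplex {-t−Δt ≤ s_1 ≤ ... ≤ s_m ≤ t+Δt} is the disjoint union (up to measure zero) of the image I_{Δt}({-t ≤ s ≤ t}) and the set T_{t+Δt}^{(m)} = { -t−Δt ≤ s ≤ t+Δt : ∃ j, |s_j| ≤ Δt }. -/
/-- The ordered simplex `{a ≤ s_1 ≤ ... ≤ s_m ≤ b}`. -/
def simplexSet (m : ℕ) (a b : ℝ) : Set (Fin m → ℝ) :=
  {s | Monotone s ∧ ∀ i, a ≤ s i ∧ s i ≤ b}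

/-- The shift map `I_{Δt}`. -/
noncomputable def Ishift (Δt : ℝ) {m : ℕ} (s : Fin m → ℝ) : Fin m → ℝ :=
  fun k => if 0 ≤ s k then s k + Δt else s k - Δt

/-- Domain decomposition: the simplex `{-t−Δt ≤ s ≤ t+Δt}` is the union of the image
`I_{Δt}({-t ≤ s ≤ t})` and `T_{t+Δt}^{(m)} = {s in the big simplex : ∃ j, |s_j| ≤ Δt}`,
and the intersection of the two sets has Lebesgue measure zero. -/
theorem simplex_decomposition (m : ℕ) (hm : 1 ≤ m) (t Δt : ℝ) (ht : 0 ≤ t) (hΔt : 0 ≤ Δt) :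
    simplexSet m (-(t + Δt)) (t + Δt) =
      (Ishift Δt '' simplexSet m (-t) t) ∪
        {s ∈ simplexSet m (-(t + Δt)) (t + Δt) | ∃ j, |s j| ≤ Δt} ∧
    MeasureTheory.volume
      ((Ishift Δt '' simplexSet m (-t) t) ∩
        {s ∈ simplexSet m (-(t + Δt)) (t + Δt) | ∃ j, |s j| ≤ Δt}) = 0 := by
  have himg : ∀ u ∈ simplexSet m (-t) t, Ishift Δt u ∈ simplexSet m (-(t + Δt)) (t + Δt) := by
    rintro u ⟨hmono, hb⟩
    constructor
    · intro j k hjk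
      simp only [Ishift]
      by_cases hj : 0 ≤ u j
      · rw [if_pos hj, if_pos (hj.trans (hmono hjk))]
        linarith [hmono hjk]
      · rw [if_neg hj]
        by_cases hk : 0 ≤ u k
        · rw [if_pos hk]; push_neg at hj; linarith
        · rw [if_neg hk]; linarith [hmono hjk]
    · intro i
      simp only [Ishift]
      rcases hb i with ⟨h1, h2⟩
      by_cases hi : 0 ≤ u i
      · rw [if_pos hi]; constructor <;> linarith
      · rw [if_neg hi]; push_neg at hi; constructor <;> linarith
  constructor
  · ext s
    simp only [Set.mem_union, Set.mem_setOf_eq, Set.mem_image]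
    constructor
    · intro hs
      by_cases hj : ∃ j, |s j| ≤ Δt
      · right; exact ⟨hs, hj⟩
      · left
        push_neg at hj
        obtain ⟨hmono, hb⟩ := hs
        refine ⟨fun k => if 0 ≤ s k then s k - Δt else s k + Δt, ⟨?_, ?_⟩, ?_⟩
        · intro j k hjk
          simp only
          by_cases h1 : 0 ≤ s j
          · rw [if_pos h1, if_pos (h1.trans (hmono hjk))]
            linarith [hmono hjk]
          · rw [if_neg h1]
            by_cases h2 : 0 ≤ s k
            · rw [if_pos h2]
              have hk : Δt < s k := by
                have := hj k
                rw [abs_of_nonneg h2] at this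
                linarith
              push_neg at h1
              have hjΔ : s j < -Δt := by
                have := hj j; rw [abs_of_neg h1] at this; linarith
              linarith
            · rw [if_neg h2]; linarith [hmono hjk]
        · intro i
          rcases hb i with ⟨h1, h2⟩
          have habs := hj i
          by_cases hi : 0 ≤ s i
          · rw [abs_of_nonneg hi] at habs
            simp only [if_pos hi]
            constructor <;> linarith
          · push_neg at hi
            rw [abs_of_neg hi] at habs
            simp only [if_neg (not_le.mpr hi)]
            constructor <;> linarith
        · funext k
          simp only [Ishift]
          have habs := hj k
          by_cases hk : 0 ≤ s k
          · rw [abs_of_nonneg hk] at habs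
            rw [if_pos hk, if_pos (by linarith : (0:ℝ) ≤ s k - Δt)]
            ring
          · push_neg at hk
            rw [abs_of_neg hk] at habs
            rw [if_neg (not_le.mpr hk), if_neg (by push_neg; linarith : ¬ (0:ℝ) ≤ s k + Δt)]
            ring
    · rintro (⟨u, hu, rfl⟩ | ⟨hs, _⟩)
      · exact himg u hu
      · exact hs
  · have hsub : (Ishift Δt '' simplexSet m (-t) t) ∩
        {s ∈ simplexSet m (-(t + Δt)) (t + Δt) | ∃ j, |s j| ≤ Δt} ⊆
        ⋃ j : Fin m, {s : Fin m → ℝ | s j = Δt} := by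
      rintro s ⟨⟨u, hu, rfl⟩, -, j, hj⟩
      refine Set.mem_iUnion.mpr ⟨j, ?_⟩
      simp only [Set.mem_setOf_eq, Ishift] at hj ⊢
      by_cases huj : 0 ≤ u j
      · rw [if_pos huj] at hj ⊢
        rw [abs_of_nonneg (by linarith)] at hj
        linarith
      · rw [if_neg huj] at hj
        push_neg at huj
        rw [abs_of_neg (by linarith)] at hj
        linarith
    refine MeasureTheory.measure_mono_null hsub ?_
    refine MeasureTheory.measure_iUnion_null fun j => ?_
    rw [MeasureTheory.volume_pi]
    exact MeasureTheory.Measure.pi_hyperplane (fun _ : Fin m => (MeasureTheory.volume : MeasureTheory.Measure ℝ)) j Δt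
end
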